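/- For any sequence r_1, ..., r_T with |r_t| ≤ 1 for all t, letting C_t = Σ_{τ≤t} |r_τ| (C_0 = 0), we have Σ_{t=1}^T |r_t|/(C_{t-1} + 1) ≤ 1 + ln(1 + C_T). -/

import Mathlib

lemma log_ge_div (u : ℝ) (hu : 0 ≤ u) : u / (1 + u) ≤ Real.log (1 + u) := by
  have h1 : (0:ℝ) < 1 + u := by linarith
  have h2 : Real.log (1 / (1 + u)) ≤ 1 / (1 + u) - 1 :=
    Real.log_le_sub_one_of_pos (by positivity)
  rw [Real.log_div one_ne_zero (ne_of_gt h1), Real.log_one] at h2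
  have : 1 / (1 + u) - 1 = -(u / (1 + u)) := by field_simp; ring
  linarith [this ▸ h2]

lemma key_step (a c : ℝ) (ha0 : 0 ≤ a) (ha1 : a ≤ 1) (hc : 0 ≤ c) :
    a / (1 + c) ≤ Real.log (1 + c + a) - Real.log (1 + c)
      + (1 / (1 + c) - 1 / (1 + c + a)) := by
  have hc1 : (0:ℝ) < 1 + c := by linarith
  have hca : (0:ℝ) < 1 + c + a := by linarith
  set u := a / (1 + c) with hu_def
  have hu0 : 0 ≤ u := div_nonneg ha0 (le_of_lt hc1)
  have hfac : 1 + c + a = (1 + c) * (1 + u) := by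
    rw [hu_def]
    field_simp
  have hlog : Real.log (1 + c + a) - Real.log (1 + c) = Real.log (1 + u) := by
    rw [hfac, Real.log_mul (ne_of_gt hc1) (by positivity)]
    ring
  have hinv : 1 / (1 + c) - 1 / (1 + c + a) = u / (1 + c + a) := by
    rw [hu_def]
    field_simp
    ring
  rw [hlog, hinv, hfac]
  -- need : u ≤ log(1+u) + u/((1+c)(1+u))
  have hu1c : u * (1 + c) = a := by
    rw [hu_def]; field_simp
  have hkey : u - Real.log (1 + u) ≤ u ^ 2 / (1 + u) := by
    have := log_ge_div u hu0
    have : u - u ^ 2 / (1 + u) = u / (1 + u) := by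
      field_simp; ring
    nlinarith [log_ge_div u hu0]
  have h2 : u ^ 2 / (1 + u) ≤ u / ((1 + c) * (1 + u)) := by
    rw [div_le_div_iff₀ (by positivity) (by positivity)]
    have : u * (1 + c) ≤ 1 := by rw [hu1c]; exact ha1
    nlinarith
  linarith

theorem self_normalized_sum (T : ℕ) (r : ℕ → ℝ) (hr : ∀ t, |r t| ≤ 1) :
    ∑ t ∈ Finset.range T, |r t| / ((∑ τ ∈ Finset.range t, |r τ|) + 1)
      ≤ 1 + Real.log (1 + ∑ τ ∈ Finset.range T, |r τ|) := by
  have hC : ∀ n, 0 ≤ ∑ τ ∈ Finset.range n, |r τ| := by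
    intro n; exact Finset.sum_nonneg fun i _ => abs_nonneg _
  have aux : ∀ n, ∑ t ∈ Finset.range n, |r t| / ((∑ τ ∈ Finset.range t, |r τ|) + 1)
      ≤ Real.log (1 + ∑ τ ∈ Finset.range n, |r τ|)
        + (1 - 1 / (1 + ∑ τ ∈ Finset.range n, |r τ|)) := by
    intro n
    induction n with
    | zero => simp
    | succ k ih =>
      rw [Finset.sum_range_succ, Finset.sum_range_succ (f := fun τ => |r τ|)]
      have hkey := key_step (|r k|) (∑ τ ∈ Finset.range k, |r τ|)
        (abs_nonneg _) (hr k) (hC k)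
      have hco : (∑ τ ∈ Finset.range k, |r τ|) + 1 = 1 + ∑ τ ∈ Finset.range k, |r τ| := by ring
      have hco2 : 1 + ((∑ τ ∈ Finset.range k, |r τ|) + |r k|)
          = 1 + (∑ τ ∈ Finset.range k, |r τ|) + |r k| := by ring
      rw [hco, hco2]
      linarith
  have h := aux T
  have hpos : (0:ℝ) < 1 + ∑ τ ∈ Finset.range T, |r τ| := by linarith [hC T]
  have : 0 ≤ 1 / (1 + ∑ τ ∈ Finset.range T, |r τ|) := by positivity
  linarith
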